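/- Suppose q1, q2 > 0 satisfy Q := 1/q1 + 1/q2 < 1 and Q_{edge,2} := 1/q1 + 3/(2q2) > 1. Then ∫₀^∞ ( ∫₀^∞ ∫₀^1 ρ(t,s+v) ds dt )² dv < ∞, where ρ(t,s) = (|t|^{q1} + |s|^{q2})^{-1}. -/

import Mathlib

open MeasureTheory Real Set

noncomputable def rho (q1 q2 t s : ℝ) : ℝ := (|t| ^ q1 + |s| ^ q2)⁻¹

/-- Integrability and an integral bound for `min A (C * u ^ (-p))` on `Ioi 0`. -/
private lemma minAux {A C p : ℝ} (c : ℝ) (hA : 0 ≤ A) (hC : 0 ≤ C) (hp : 1 < p)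
    (hc : 0 < c) :
    IntegrableOn (fun u : ℝ => min A (C * u ^ (-p))) (Ioi (0:ℝ)) ∧
    ∫ u in Ioi (0:ℝ), min A (C * u ^ (-p)) ≤ A * c + C * (c ^ (1 - p) / (p - 1)) := by
  set f : ℝ → ℝ := fun u => min A (C * u ^ (-p)) with hf
  have hmeas : Measurable f := measurable_const.min ((measurable_id.pow_const (-p)).const_mul C)
  have hnn : ∀ u : ℝ, 0 < u → 0 ≤ f u := fun u hu =>
    le_min hA (mul_nonneg hC (rpow_nonneg hu.le _))
  have h1 : IntegrableOn f (Ioc 0 c) := by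
    refine Integrable.mono' (g := fun _ => A)
      (integrableOn_const measure_Ioc_lt_top.ne) hmeas.aestronglyMeasurable.restrict ?_
    filter_upwards [ae_restrict_mem measurableSet_Ioc] with u hu
    rw [Real.norm_eq_abs, abs_of_nonneg (hnn u hu.1)]
    exact min_le_left _ _
  have hioi : IntegrableOn (fun u : ℝ => C * u ^ (-p)) (Ioi c) :=
    (integrableOn_Ioi_rpow_of_lt (by linarith) hc).const_mul C
  have h2 : IntegrableOn f (Ioi c) := by
    refine Integrable.mono' hioi hmeas.aestronglyMeasurable.restrict ?_
    filter_upwards [ae_restrict_mem measurableSet_Ioi] with u hu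
    rw [Real.norm_eq_abs, abs_of_nonneg (hnn u (hc.trans hu))]
    exact min_le_right _ _
  have hsplit : Ioc (0:ℝ) c ∪ Ioi c = Ioi 0 := Ioc_union_Ioi_eq_Ioi hc.le
  constructor
  · rw [← hsplit]; exact h1.union h2
  · rw [← hsplit, setIntegral_union (Ioc_disjoint_Ioi le_rfl) measurableSet_Ioi h1 h2]
    have e1 : ∫ u in Ioc (0:ℝ) c, f u ≤ A * c := by
      have hle : ∫ u in Ioc (0:ℝ) c, f u ≤ ∫ _ in Ioc (0:ℝ) c, A := by
        refine integral_mono_of_nonneg ?_ (integrableOn_const measure_Ioc_lt_top.ne) ?_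
        · filter_upwards [ae_restrict_mem measurableSet_Ioc] with u hu using hnn u hu.1
        · exact Filter.Eventually.of_forall fun u => min_le_left _ _
      refine hle.trans ?_
      rw [setIntegral_const, measureReal_def, Real.volume_Ioc, smul_eq_mul,
        ENNReal.toReal_ofReal (by linarith)]
      exact le_of_eq (by ring)
    have e2 : ∫ u in Ioi c, f u ≤ C * (c ^ (1 - p) / (p - 1)) := by
      have hle : ∫ u in Ioi c, f u ≤ ∫ u in Ioi c, C * u ^ (-p) := by
        refine integral_mono_of_nonneg ?_ hioi
          (Filter.Eventually.of_forall fun u => min_le_right _ _)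
        filter_upwards [ae_restrict_mem measurableSet_Ioi] with u hu using hnn u (hc.trans hu)
      refine hle.trans ?_
      rw [integral_const_mul, integral_Ioi_rpow_of_lt (by linarith) hc]
      have hne : p - 1 ≠ 0 := ne_of_gt (by linarith)
      have : -c ^ (-p + 1) / (-p + 1) = c ^ (1 - p) / (p - 1) := by
        rw [show (-p + 1 : ℝ) = 1 - p by ring]
        rw [div_eq_div_iff (by intro h; apply hne; linarith) hne]
        ring
      exact mul_le_mul_of_nonneg_left (le_of_eq this) hC
    exact add_le_add e1 e2

private lemma minAux1 {A p : ℝ} (c : ℝ) (hA : 0 ≤ A) (hp : 1 < p) (hc : 0 < c) :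
    IntegrableOn (fun u : ℝ => min A (u ^ (-p))) (Ioi (0:ℝ)) ∧
    ∫ u in Ioi (0:ℝ), min A (u ^ (-p)) ≤ A * c + c ^ (1 - p) / (p - 1) := by
  have h := minAux (C := 1) c hA zero_le_one hp hc
  simpa using h

theorem stmt_4 (q1 q2 : ℝ) (hq1 : 0 < q1) (hq2 : 0 < q2)
    (hQ : 1 / q1 + 1 / q2 < 1) (hE : 1 < 1 / q1 + 3 / (2 * q2)) :
    ∫⁻ v in Ioi (0 : ℝ),
      ENNReal.ofReal ((∫ t in Ioi (0 : ℝ), ∫ s in Ioc (0 : ℝ) 1,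
        rho q1 q2 t (s + v)) ^ 2) < ⊤ := by
  have hq1' : 1 < q1 := by
    rw [← div_lt_one hq1]
    have h2 : 0 < 1/q2 := by positivity
    linarith
  have hq2' : 1 < q2 := by
    rw [← div_lt_one hq2]
    have h2 : 0 < 1/q1 := by positivity
    linarith
  have hq1ne : q1 ≠ 0 := hq1.ne'
  have hq2ne : q2 ≠ 0 := hq2.ne'
  set α : ℝ := q2 - q2/q1 with hαdef
  set β : ℝ := q1 - q1/q2 with hβdef
  have hprod : 1 * q2 + q1 * 1 < q1 * q2 := by
    rw [div_add_div _ _ hq1ne hq2ne, div_lt_one (by positivity)] at hQ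
    exact hQ
  have hα1 : 1 < α := by
    have h : q2 / q1 < q2 - 1 := by rw [div_lt_iff₀ hq1]; nlinarith
    rw [hαdef]; linarith
  have hβ1 : 1 < β := by
    have h : q1 / q2 < q1 - 1 := by rw [div_lt_iff₀ hq2]; nlinarith
    rw [hβdef]; linarith
  have hα32 : α < 3/2 := by
    have h3 : q1 * (2 * q2) < 1 * (2 * q2) + q1 * 3 := by
      rw [div_add_div _ _ hq1ne (by positivity), one_lt_div (by positivity)] at hE
      exact hE
    have h : q2 - 3/2 < q2 / q1 := by rw [lt_div_iff₀ hq1]; nlinarith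
    rw [hαdef]; linarith
  set C1 : ℝ := q2 / (q2 - 1) with hC1def
  have hC1 : 0 ≤ C1 := div_nonneg hq2.le (by linarith)
  set C2 : ℝ := 1 + 1/(q1 - 1) with hC2def
  have hC2 : 0 ≤ C2 := by
    have h : 0 < 1/(q1-1) := div_pos one_pos (by linarith)
    rw [hC2def]; linarith
  set K : ℝ := 1/(q2 - 1) + C1/(β - 1) with hKdef
  have hK : 0 ≤ K := by
    have h1 : 0 < 1/(q2-1) := div_pos one_pos (by linarith)
    have h2 : 0 ≤ C1/(β-1) := div_nonneg hC1 (by linarith)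
    rw [hKdef]; linarith
  have rho_nn : ∀ t s : ℝ, 0 ≤ rho q1 q2 t s := fun t s => by
    unfold rho; positivity
  have inv_le_rpow : ∀ x p y : ℝ, 0 < x → x ^ p ≤ y → y⁻¹ ≤ x ^ (-p) := by
    intro x p y hx hxy
    rw [Real.rpow_neg hx.le]
    exact inv_anti₀ (rpow_pos_of_pos hx p) hxy
  -- the main bound on the inner double integral
  have key : ∀ v : ℝ, 0 < v →
      (∫ t in Ioi (0:ℝ), ∫ s in Ioc (0:ℝ) 1, rho q1 q2 t (s+v)) ≤
        min (C2 * v ^ (-α)) (K * v ^ (1 - α)) := by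
    intro v hv
    -- pointwise bounds on rho
    have bound1 : ∀ t : ℝ, 0 < t → ∀ s ∈ Ioc (0:ℝ) 1, rho q1 q2 t (s+v) ≤ t ^ (-q1) := by
      intro t ht s hs
      have hsv : 0 < s + v := by have := hs.1; linarith
      unfold rho
      rw [abs_of_pos ht, abs_of_pos hsv]
      exact inv_le_rpow t q1 _ ht (le_add_of_nonneg_right (rpow_nonneg hsv.le _))
    have bound2 : ∀ t : ℝ, 0 < t → ∀ s ∈ Ioc (0:ℝ) 1, rho q1 q2 t (s+v) ≤ (s+v) ^ (-q2) := by
      intro t ht s hs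
      have hsv : 0 < s + v := by have := hs.1; linarith
      unfold rho
      rw [abs_of_pos ht, abs_of_pos hsv]
      exact inv_le_rpow (s+v) q2 _ hsv (le_add_of_nonneg_left (rpow_nonneg ht.le _))
    have bound3 : ∀ t : ℝ, 0 < t → ∀ s ∈ Ioc (0:ℝ) 1, rho q1 q2 t (s+v) ≤ v ^ (-q2) := by
      intro t ht s hs
      have hsv : 0 < s + v := by have := hs.1; linarith
      unfold rho
      rw [abs_of_pos ht, abs_of_pos hsv]
      refine inv_le_rpow v q2 _ hv ?_
      have h1 : v ^ q2 ≤ (s+v) ^ q2 := rpow_le_rpow hv.le (by linarith [hs.1]) hq2.le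
      have h2 : (0:ℝ) ≤ t ^ q1 := rpow_nonneg ht.le _
      linarith
    -- translation identity for integrals over Ioc 0 1 of functions of s + v
    have transl : ∀ f : ℝ → ℝ, (∫ s in Ioc (0:ℝ) 1, f (s+v)) = ∫ u in Ioc v (1+v), f u := by
      intro f
      rw [← intervalIntegral.integral_of_le zero_le_one,
        intervalIntegral.integral_comp_add_right f v,
        intervalIntegral.integral_of_le (by linarith), zero_add]
    -- claim A : inner t ≤ min (v^(-q2)) (t^(-q1))
    have claimA : ∀ t : ℝ, 0 < t →
        (∫ s in Ioc (0:ℝ) 1, rho q1 q2 t (s+v)) ≤ min (v ^ (-q2)) (t ^ (-q1)) := by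
      intro t ht
      have h : (∫ s in Ioc (0:ℝ) 1, rho q1 q2 t (s+v)) ≤
          ∫ _ in Ioc (0:ℝ) 1, min (v ^ (-q2)) (t ^ (-q1)) := by
        refine integral_mono_of_nonneg (Filter.Eventually.of_forall fun s => rho_nn _ _)
          (integrableOn_const measure_Ioc_lt_top.ne) ?_
        filter_upwards [ae_restrict_mem measurableSet_Ioc] with s hs
        exact le_min (bound3 t ht s hs) (bound1 t ht s hs)
      refine h.trans (le_of_eq ?_)
      rw [setIntegral_const, measureReal_def, Real.volume_Ioc, smul_eq_mul, ENNReal.toReal_ofReal (by norm_num)]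
      norm_num
    -- claim B : inner t ≤ v^(1-q2)/(q2-1)
    have claimB : ∀ t : ℝ, 0 < t →
        (∫ s in Ioc (0:ℝ) 1, rho q1 q2 t (s+v)) ≤ v ^ (1 - q2) / (q2 - 1) := by
      intro t ht
      have hginteg : IntegrableOn (fun s : ℝ => (s+v) ^ (-q2)) (Ioc (0:ℝ) 1) := by
        refine Integrable.mono' (g := fun _ => v ^ (-q2))
          (integrableOn_const measure_Ioc_lt_top.ne)
          ((measurable_id.add_const v).pow_const (-q2)).aestronglyMeasurable.restrict ?_
        filter_upwards [ae_restrict_mem measurableSet_Ioc] with s hs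
        have hsv : 0 < s + v := by have := hs.1; linarith
        rw [Real.norm_eq_abs, abs_of_nonneg (rpow_nonneg hsv.le _)]
        rw [Real.rpow_neg hsv.le, Real.rpow_neg hv.le]
        exact inv_anti₀ (rpow_pos_of_pos hv q2)
          (rpow_le_rpow hv.le (by linarith [hs.1]) hq2.le)
      have h1 : (∫ s in Ioc (0:ℝ) 1, rho q1 q2 t (s+v)) ≤
          ∫ s in Ioc (0:ℝ) 1, (s+v) ^ (-q2) := by
        refine integral_mono_of_nonneg (Filter.Eventually.of_forall fun s => rho_nn _ _)
          hginteg ?_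
        filter_upwards [ae_restrict_mem measurableSet_Ioc] with s hs
        exact bound2 t ht s hs
      have h2 : (∫ s in Ioc (0:ℝ) 1, (s+v) ^ (-q2)) = ∫ u in Ioc v (1+v), u ^ (-q2) :=
        transl (fun u => u ^ (-q2))
      have h3 : (∫ u in Ioc v (1+v), u ^ (-q2)) ≤ ∫ u in Ioi v, u ^ (-q2) := by
        refine setIntegral_mono_set (integrableOn_Ioi_rpow_of_lt (by linarith) hv) ?_
          (HasSubset.Subset.eventuallyLE Ioc_subset_Ioi_self)
        filter_upwards [ae_restrict_mem measurableSet_Ioi] with u hu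
        exact rpow_nonneg (hv.trans hu).le _
      have h4 : (∫ u in Ioi v, u ^ (-q2)) = v ^ (1 - q2) / (q2 - 1) := by
        rw [integral_Ioi_rpow_of_lt (by linarith) hv]
        rw [show (-q2 + 1 : ℝ) = 1 - q2 by ring]
        rw [div_eq_div_iff (sub_ne_zero_of_ne (ne_of_lt hq2')) (sub_ne_zero_of_ne (ne_of_gt hq2'))]
        ring
      calc (∫ s in Ioc (0:ℝ) 1, rho q1 q2 t (s+v)) ≤ ∫ s in Ioc (0:ℝ) 1, (s+v) ^ (-q2) := h1
        _ = ∫ u in Ioc v (1+v), u ^ (-q2) := h2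
        _ ≤ ∫ u in Ioi v, u ^ (-q2) := h3
        _ = v ^ (1 - q2) / (q2 - 1) := h4
    -- claim C : inner t ≤ C1 * t^(-β)
    have claimC : ∀ t : ℝ, 0 < t →
        (∫ s in Ioc (0:ℝ) 1, rho q1 q2 t (s+v)) ≤ C1 * t ^ (-β) := by
      intro t ht
      have hcpos : (0:ℝ) < t ^ (q1/q2) := rpow_pos_of_pos ht _
      have hminaux := minAux1 (A := t ^ (-q1)) (p := q2) (t ^ (q1/q2))
        (rpow_nonneg ht.le _) hq2' hcpos
      have h1 : (∫ s in Ioc (0:ℝ) 1, rho q1 q2 t (s+v)) ≤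
          ∫ s in Ioc (0:ℝ) 1, min (t ^ (-q1)) ((s+v) ^ (-q2)) := by
        refine integral_mono_of_nonneg (Filter.Eventually.of_forall fun s => rho_nn _ _) ?_ ?_
        · refine Integrable.mono' (g := fun _ => t ^ (-q1))
            (integrableOn_const measure_Ioc_lt_top.ne)
            (measurable_const.min ((measurable_id.add_const v).pow_const
              (-q2))).aestronglyMeasurable.restrict ?_
          filter_upwards [ae_restrict_mem measurableSet_Ioc] with s hs
          have hsv : 0 < s + v := by have := hs.1; linarith
          rw [Real.norm_eq_abs,
            abs_of_nonneg (le_min (rpow_nonneg ht.le _) (rpow_nonneg hsv.le _))]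
          exact min_le_left _ _
        · filter_upwards [ae_restrict_mem measurableSet_Ioc] with s hs
          exact le_min (bound1 t ht s hs) (bound2 t ht s hs)
      have h2 : (∫ s in Ioc (0:ℝ) 1, min (t ^ (-q1)) ((s+v) ^ (-q2))) =
          ∫ u in Ioc v (1+v), min (t ^ (-q1)) (u ^ (-q2)) :=
        transl (fun u => min (t ^ (-q1)) (u ^ (-q2)))
      have h3 : (∫ u in Ioc v (1+v), min (t ^ (-q1)) (u ^ (-q2))) ≤
          ∫ u in Ioi (0:ℝ), min (t ^ (-q1)) (u ^ (-q2)) := by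
        refine setIntegral_mono_set hminaux.1 ?_
          (HasSubset.Subset.eventuallyLE fun x hx => hv.trans hx.1)
        filter_upwards [ae_restrict_mem measurableSet_Ioi] with u hu
        exact le_min (rpow_nonneg ht.le _) (rpow_nonneg (le_of_lt hu) _)
      have h4 := hminaux.2
      have ec1 : t ^ (-q1) * t ^ (q1/q2) = t ^ (-β) := by
        rw [← Real.rpow_add ht]
        congr 1
        rw [hβdef]; ring
      have ec2 : (t ^ (q1/q2)) ^ (1 - q2) = t ^ (-β) := by
        rw [← Real.rpow_mul ht.le]
        congr 1
        rw [hβdef]; field_simp; ring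
      have ec3 : t ^ (-β) + t ^ (-β) / (q2 - 1) = C1 * t ^ (-β) := by
        rw [hC1def]
        have h5 : q2 - 1 ≠ 0 := sub_ne_zero_of_ne (ne_of_gt hq2')
        field_simp
        ring
      calc (∫ s in Ioc (0:ℝ) 1, rho q1 q2 t (s+v)) ≤
            ∫ s in Ioc (0:ℝ) 1, min (t ^ (-q1)) ((s+v) ^ (-q2)) := h1
        _ = ∫ u in Ioc v (1+v), min (t ^ (-q1)) (u ^ (-q2)) := h2
        _ ≤ ∫ u in Ioi (0:ℝ), min (t ^ (-q1)) (u ^ (-q2)) := h3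
        _ ≤ t ^ (-q1) * t ^ (q1/q2) + (t ^ (q1/q2)) ^ (1 - q2) / (q2 - 1) := h4
        _ = C1 * t ^ (-β) := by rw [ec1, ec2, ec3]
    -- nonnegativity of the inner integral
    have inner_nn : ∀ t : ℝ, 0 ≤ ∫ s in Ioc (0:ℝ) 1, rho q1 q2 t (s+v) :=
      fun t => integral_nonneg fun s => rho_nn _ _
    have hcv : (0:ℝ) < v ^ (q2/q1) := rpow_pos_of_pos hv _
    -- big bound : P ≤ C2 * v^(-α)
    have Fbig : (∫ t in Ioi (0:ℝ), ∫ s in Ioc (0:ℝ) 1, rho q1 q2 t (s+v)) ≤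
        C2 * v ^ (-α) := by
      have hminaux := minAux1 (A := v ^ (-q2)) (p := q1) (v ^ (q2/q1))
        (rpow_nonneg hv.le _) hq1' hcv
      have h1 : (∫ t in Ioi (0:ℝ), ∫ s in Ioc (0:ℝ) 1, rho q1 q2 t (s+v)) ≤
          ∫ t in Ioi (0:ℝ), min (v ^ (-q2)) (t ^ (-q1)) := by
        refine integral_mono_of_nonneg (Filter.Eventually.of_forall inner_nn) hminaux.1 ?_
        filter_upwards [ae_restrict_mem measurableSet_Ioi] with t ht
        exact claimA t ht
      refine (h1.trans hminaux.2).trans (le_of_eq ?_)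
      have ec1 : v ^ (-q2) * v ^ (q2/q1) = v ^ (-α) := by
        rw [← Real.rpow_add hv]
        congr 1
        rw [hαdef]; ring
      have ec2 : (v ^ (q2/q1)) ^ (1 - q1) = v ^ (-α) := by
        rw [← Real.rpow_mul hv.le]
        congr 1
        rw [hαdef]; field_simp; ring
      rw [ec1, ec2, hC2def]
      have h5 : q1 - 1 ≠ 0 := sub_ne_zero_of_ne (ne_of_gt hq1')
      field_simp
    -- small bound : P ≤ K * v^(1-α)
    have Fsmall : (∫ t in Ioi (0:ℝ), ∫ s in Ioc (0:ℝ) 1, rho q1 q2 t (s+v)) ≤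
        K * v ^ (1 - α) := by
      have hA' : 0 ≤ v ^ (1 - q2) / (q2 - 1) := div_nonneg (rpow_nonneg hv.le _) (by linarith)
      have hminaux := minAux (A := v ^ (1 - q2) / (q2 - 1)) (C := C1) (p := β)
        (v ^ (q2/q1)) hA' hC1 hβ1 hcv
      have h1 : (∫ t in Ioi (0:ℝ), ∫ s in Ioc (0:ℝ) 1, rho q1 q2 t (s+v)) ≤
          ∫ t in Ioi (0:ℝ), min (v ^ (1 - q2) / (q2 - 1)) (C1 * t ^ (-β)) := by
        refine integral_mono_of_nonneg (Filter.Eventually.of_forall inner_nn) hminaux.1 ?_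
        filter_upwards [ae_restrict_mem measurableSet_Ioi] with t ht
        exact le_min (claimB t ht) (claimC t ht)
      refine (h1.trans hminaux.2).trans (le_of_eq ?_)
      have ec1 : v ^ (1 - q2) / (q2 - 1) * v ^ (q2/q1) = v ^ (1 - α) / (q2 - 1) := by
        rw [div_mul_eq_mul_div, ← Real.rpow_add hv]
        congr 2
        rw [hαdef]; ring
      have ec2 : (v ^ (q2/q1)) ^ (1 - β) = v ^ (1 - α) := by
        rw [← Real.rpow_mul hv.le]
        congr 1
        rw [hαdef, hβdef]; field_simp; ring
      rw [ec1, ec2, hKdef]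
      ring
    exact le_min Fbig Fsmall
  -- now conclude via the integrable dominating function
  set G : ℝ → ℝ := fun v => (min (C2 * v ^ (-α)) (K * v ^ (1 - α)))^2 with hGdef
  have hGmeas : Measurable G :=
    (((measurable_id.pow_const (-α)).const_mul C2).min
      ((measurable_id.pow_const (1-α)).const_mul K)).pow_const 2
  have hmin_nn : ∀ v : ℝ, 0 < v → 0 ≤ min (C2 * v ^ (-α)) (K * v ^ (1 - α)) := fun v hv =>
    le_min (mul_nonneg hC2 (rpow_nonneg hv.le _)) (mul_nonneg hK (rpow_nonneg hv.le _))
  have hGIoc : IntegrableOn G (Ioc (0:ℝ) 1) := by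
    have hint0 : IntervalIntegrable (fun v : ℝ => v ^ (2 - 2*α)) volume 0 1 :=
      intervalIntegral.intervalIntegrable_rpow' (by
        have h := hα32
        rw [hαdef] at h ⊢
        linarith)
    have hint : IntegrableOn (fun v : ℝ => v ^ (2 - 2*α)) (Ioc (0:ℝ) 1) := hint0.1
    refine Integrable.mono' (hint.const_mul (K^2)) hGmeas.aestronglyMeasurable.restrict ?_
    filter_upwards [ae_restrict_mem measurableSet_Ioc] with v hv
    have hv0 : 0 < v := hv.1
    rw [Real.norm_eq_abs, abs_of_nonneg (sq_nonneg _)]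
    have h1 : (min (C2 * v ^ (-α)) (K * v ^ (1 - α)))^2 ≤ (K * v ^ (1 - α))^2 :=
      pow_le_pow_left₀ (hmin_nn v hv0) (min_le_right _ _) 2
    refine h1.trans (le_of_eq ?_)
    have hsq : (v ^ (1-α))^2 = v ^ (2-2*α) := by
      rw [sq, ← Real.rpow_add hv0]; congr 1; ring
    rw [mul_pow, hsq]
  have hGIoi : IntegrableOn G (Ioi (1:ℝ)) := by
    have hint : IntegrableOn (fun v : ℝ => v ^ (-(2*α))) (Ioi (1:ℝ)) :=
      integrableOn_Ioi_rpow_of_lt (by linarith) one_pos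
    refine Integrable.mono' (hint.const_mul (C2^2)) hGmeas.aestronglyMeasurable.restrict ?_
    filter_upwards [ae_restrict_mem measurableSet_Ioi] with v hv
    have hv0 : (0:ℝ) < v := lt_trans one_pos hv
    rw [Real.norm_eq_abs, abs_of_nonneg (sq_nonneg _)]
    have h1 : (min (C2 * v ^ (-α)) (K * v ^ (1 - α)))^2 ≤ (C2 * v ^ (-α))^2 :=
      pow_le_pow_left₀ (hmin_nn v hv0) (min_le_left _ _) 2
    refine h1.trans (le_of_eq ?_)
    have hsq : (v ^ (-α))^2 = v ^ (-(2*α)) := by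
      rw [sq, ← Real.rpow_add hv0]; congr 1; ring
    rw [mul_pow, hsq]
  have hGint : IntegrableOn G (Ioi (0:ℝ)) := by
    rw [← Ioc_union_Ioi_eq_Ioi (zero_le_one : (0:ℝ) ≤ 1)]
    exact hGIoc.union hGIoi
  refine lt_of_le_of_lt (lintegral_mono_ae ?_) (Integrable.lintegral_lt_top hGint)
  filter_upwards [ae_restrict_mem measurableSet_Ioi] with v hv
  refine ENNReal.ofReal_le_ofReal ?_
  have hP0 : 0 ≤ ∫ t in Ioi (0:ℝ), ∫ s in Ioc (0:ℝ) 1, rho q1 q2 t (s+v) :=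
    integral_nonneg fun t => integral_nonneg fun s => rho_nn _ _
  exact pow_le_pow_left₀ hP0 (key v hv) 2
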